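/- Assume F : π → Matrix (Fin n) (Fin n) ℂ is bounded and satisfies both condition (1.4) (there exist a finite set S ⊆ π and C > 0 such that for every g ∉ S the matrix F g is invertible and ‖(F g)⁻¹‖ ≤ C) and condition (1.5) (for every h ∈ π and ε > 0 the set {g ∈ π | ‖F (h*g) − F g‖ ≥ ε} is finite). Then the pair (L, Φ_F) is a Fredholm representation of π: Φ_F is invertible modulo compact operators, and for every h ∈ π the operator Φ_F ∘ L_h − L_h ∘ Φ_F is compact. -/

import Mathlib

open scoped Matrix.Norms.L2Operator

namespace FRaux

variable {π : Type*} {n : ℕ}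

local notation "H" => lp (fun _ : π => EuclideanSpace ℂ (Fin n)) 2

/-- `A.mulVec x` as an element of Euclidean space. -/
noncomputable def mV (A : Matrix (Fin n) (Fin n) ℂ) (x : EuclideanSpace ℂ (Fin n)) :
    EuclideanSpace ℂ (Fin n) := (EuclideanSpace.equiv (Fin n) ℂ).symm (A.mulVec x)

lemma mV_add (A : Matrix (Fin n) (Fin n) ℂ) (x y : EuclideanSpace ℂ (Fin n)) :
    mV A (x + y) = mV A x + mV A y := by ext i; simp [mV, Matrix.mulVec_add]

lemma mV_smul (A : Matrix (Fin n) (Fin n) ℂ) (c : ℂ) (x : EuclideanSpace ℂ (Fin n)) :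
    mV A (c • x) = c • mV A x := by ext i; simp [mV, Matrix.mulVec_smul]

lemma mV_zero (x : EuclideanSpace ℂ (Fin n)) : mV 0 x = 0 := by ext i; simp [mV]

lemma mV_one (x : EuclideanSpace ℂ (Fin n)) : mV 1 x = x := by ext i; simp [mV]

lemma mV_sub (A B : Matrix (Fin n) (Fin n) ℂ) (x : EuclideanSpace ℂ (Fin n)) :
    mV (A - B) x = mV A x - mV B x := by ext i; simp [mV, Matrix.sub_mulVec]

lemma mV_mul (A B : Matrix (Fin n) (Fin n) ℂ) (x : EuclideanSpace ℂ (Fin n)) :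
    mV (A * B) x = mV A (mV B x) := by ext i; simp [mV, Matrix.mulVec_mulVec]

lemma norm_mV_le {A : Matrix (Fin n) (Fin n) ℂ} {C : ℝ} (hA : ‖A‖ ≤ C)
    (x : EuclideanSpace ℂ (Fin n)) : ‖mV A x‖ ≤ C * ‖x‖ :=
  le_trans (A.l2_opNorm_mulVec x) (mul_le_mul_of_nonneg_right hA (norm_nonneg _))

lemma memℓp_mul {G : π → Matrix (Fin n) (Fin n) ℂ} {C : ℝ} (hC : 0 ≤ C)
    (hG : ∀ g, ‖G g‖ ≤ C) (ξ : H) :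
    Memℓp (fun g => mV (G g) (ξ g)) 2 := by
  apply memℓp_gen
  have hsum : Summable (fun g : π => ‖ξ g‖ ^ (2 : ENNReal).toReal) :=
    (lp.memℓp ξ).summable (by norm_num)
  refine Summable.of_nonneg_of_le (fun g => ?_) (fun g => ?_)
    (hsum.mul_left (C ^ (2 : ENNReal).toReal))
  · positivity
  · calc ‖mV (G g) (ξ g)‖ ^ (2 : ENNReal).toReal
        ≤ (C * ‖ξ g‖) ^ (2 : ENNReal).toReal :=
          Real.rpow_le_rpow (norm_nonneg _) (norm_mV_le (hG g) _) (by norm_num)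
      _ = C ^ (2 : ENNReal).toReal * ‖ξ g‖ ^ (2 : ENNReal).toReal :=
          Real.mul_rpow hC (norm_nonneg _)

lemma norm_le_mul {G : π → Matrix (Fin n) (Fin n) ℂ} {C : ℝ} (hC : 0 ≤ C)
    (hG : ∀ g, ‖G g‖ ≤ C) (ξ : H) {f : H}
    (hf : ∀ g, f g = mV (G g) (ξ g)) :
    ‖f‖ ≤ C * ‖ξ‖ := by
  refine lp.norm_le_of_forall_sum_le (by norm_num) (mul_nonneg hC (norm_nonneg _)) fun s => ?_
  have key : ∀ g, ‖f g‖ ^ (2 : ENNReal).toReal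
      ≤ C ^ (2 : ENNReal).toReal * ‖ξ g‖ ^ (2 : ENNReal).toReal := by
    intro g
    rw [hf g]
    calc ‖mV (G g) (ξ g)‖ ^ (2 : ENNReal).toReal
        ≤ (C * ‖ξ g‖) ^ (2 : ENNReal).toReal :=
          Real.rpow_le_rpow (norm_nonneg _) (norm_mV_le (hG g) _) (by norm_num)
      _ = _ := Real.mul_rpow hC (norm_nonneg _)
  calc ∑ g ∈ s, ‖f g‖ ^ (2 : ENNReal).toReal
      ≤ ∑ g ∈ s, C ^ (2 : ENNReal).toReal * ‖ξ g‖ ^ (2 : ENNReal).toReal :=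
        Finset.sum_le_sum fun g _ => key g
    _ = C ^ (2 : ENNReal).toReal * ∑ g ∈ s, ‖ξ g‖ ^ (2 : ENNReal).toReal := by
        rw [Finset.mul_sum]
    _ ≤ C ^ (2 : ENNReal).toReal * ‖ξ‖ ^ (2 : ENNReal).toReal := by
        refine mul_le_mul_of_nonneg_left ?_ (Real.rpow_nonneg hC _)
        exact lp.sum_rpow_le_norm_rpow (by norm_num) ξ s
    _ = (C * ‖ξ‖) ^ (2 : ENNReal).toReal := (Real.mul_rpow hC (norm_nonneg _)).symm

noncomputable def mulLin (G : π → Matrix (Fin n) (Fin n) ℂ) {C : ℝ} (hC : 0 ≤ C)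
    (hG : ∀ g, ‖G g‖ ≤ C) : H →ₗ[ℂ] H where
  toFun ξ := ⟨fun g => mV (G g) (ξ g), by exact memℓp_mul hC hG ξ⟩
  map_add' ξ η := by
    apply lp.ext
    funext g
    simp only [lp.coeFn_add, Pi.add_apply]
    exact mV_add _ _ _
  map_smul' c ξ := by
    apply lp.ext
    funext g
    simp only [lp.coeFn_smul, Pi.smul_apply, RingHom.id_apply]
    exact mV_smul _ _ _

noncomputable def mulOp (G : π → Matrix (Fin n) (Fin n) ℂ) {C : ℝ} (hC : 0 ≤ C)
    (hG : ∀ g, ‖G g‖ ≤ C) : H →L[ℂ] H :=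
  LinearMap.mkContinuous (mulLin G hC hG) C fun ξ =>
    norm_le_mul hC hG ξ fun _ => rfl

@[simp] lemma mulOp_apply (G : π → Matrix (Fin n) (Fin n) ℂ) {C : ℝ} (hC : 0 ≤ C)
    (hG : ∀ g, ‖G g‖ ≤ C) (ξ : H) (g : π) :
    mulOp G hC hG ξ g = mV (G g) (ξ g) := rfl

lemma isCompactOperator_of_proper {M₁ M₂ : Type*} [TopologicalSpace M₁] [Zero M₁]
    [PseudoMetricSpace M₂] [ProperSpace M₂] {f : M₁ → M₂} (hf : Continuous f) :
    IsCompactOperator f :=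
  ⟨Metric.closedBall (f 0) 1, isCompact_closedBall _ _,
    hf.continuousAt.preimage_mem_nhds (Metric.closedBall_mem_nhds _ one_pos)⟩

noncomputable def evalCLM (g : π) : H →L[ℂ] EuclideanSpace ℂ (Fin n) :=
  LinearMap.mkContinuous
    { toFun := fun ξ => ξ g
      map_add' := fun ξ η => rfl
      map_smul' := fun c ξ => rfl }
    1 fun ξ => by
      rw [one_mul]
      exact lp.norm_apply_le_norm (by norm_num) ξ g

@[simp] lemma evalCLM_apply (g : π) (ξ : H) : evalCLM g ξ = ξ g := rfl

lemma isCompact_mulOp_of_finite (G : π → Matrix (Fin n) (Fin n) ℂ) {C : ℝ} (hC : 0 ≤ C)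
    (hG : ∀ g, ‖G g‖ ≤ C) (hfin : {g : π | G g ≠ 0}.Finite) :
    IsCompactOperator (mulOp G hC hG) := by
  classical
  haveI : ProperSpace (EuclideanSpace ℂ (Fin n)) := FiniteDimensional.proper ℂ _
  set S : Finset π := hfin.toFinset with hSdef
  let M := ∀ _ : {x // x ∈ S}, EuclideanSpace ℂ (Fin n)
  let R : H →L[ℂ] M := ContinuousLinearMap.pi (fun s => evalCLM (s : π))
  have hmem : ∀ f : M, Memℓp
      (fun g : π => if h : g ∈ S then mV (G g) (f ⟨g, h⟩) else 0) 2 := by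
    intro f
    apply memℓp_gen
    apply summable_of_ne_finset_zero (s := S)
    intro g hg
    rw [dif_neg hg, norm_zero]
    exact Real.zero_rpow (by norm_num)
  let Jlin : M →ₗ[ℂ] H :=
    { toFun := fun f => ⟨fun g => if h : g ∈ S then mV (G g) (f ⟨g, h⟩) else 0, by
        exact hmem f⟩
      map_add' := fun f f' => by
        apply lp.ext
        funext g
        simp only [lp.coeFn_add, Pi.add_apply]
        by_cases h : g ∈ S
        · simp only [dif_pos h]
          exact mV_add _ _ _
        · simp [dif_neg h]
      map_smul' := fun c f => by
        apply lp.ext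
        funext g
        simp only [lp.coeFn_smul, Pi.smul_apply, RingHom.id_apply]
        by_cases h : g ∈ S
        · simp only [dif_pos h]
          exact mV_smul _ _ _
        · simp [dif_neg h] }
  haveI : FiniteDimensional ℂ M := inferInstance
  let J : M →L[ℂ] H := LinearMap.toContinuousLinearMap Jlin
  have hcomp : mulOp G hC hG = J ∘L R := by
    refine ContinuousLinearMap.ext fun ξ => lp.ext (funext fun g => ?_)
    rw [mulOp_apply]
    show mV (G g) (ξ g) = (if h : g ∈ S then mV (G g) ((R ξ) ⟨g, h⟩) else 0)
    by_cases h : g ∈ S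
    · rw [dif_pos h]
      have : (R ξ) ⟨g, h⟩ = ξ g := rfl
      rw [this]
    · rw [dif_neg h]
      have hG0 : G g = 0 := by
        by_contra hne
        exact h (hfin.mem_toFinset.2 hne)
      rw [hG0, mV_zero]
  rw [hcomp]
  have hR : IsCompactOperator R := isCompactOperator_of_proper R.continuous
  exact hR.clm_comp J

lemma isCompact_mulOp_of_vanishing (G : π → Matrix (Fin n) (Fin n) ℂ) {C : ℝ} (hC : 0 ≤ C)
    (hG : ∀ g, ‖G g‖ ≤ C)
    (hv : ∀ ε : ℝ, 0 < ε → {g : π | ε ≤ ‖G g‖}.Finite) :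
    IsCompactOperator (mulOp G hC hG) := by
  classical
  let Gk : ℕ → π → Matrix (Fin n) (Fin n) ℂ := fun k g =>
    if (1 : ℝ) / (k + 1) ≤ ‖G g‖ then G g else 0
  have hGk : ∀ k g, ‖Gk k g‖ ≤ C := by
    intro k g
    by_cases h : (1 : ℝ) / (k + 1) ≤ ‖G g‖
    · simp only [Gk]
      rw [if_pos h]
      exact hG g
    · simp only [Gk]
      rw [if_neg h, norm_zero]
      exact hC
  let T : ℕ → (H →L[ℂ] H) := fun k => mulOp (Gk k) hC (hGk k)
  have hTk : ∀ k, IsCompactOperator (T k) := by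
    intro k
    apply isCompact_mulOp_of_finite
    refine (hv ((1 : ℝ) / (k + 1)) (by positivity)).subset ?_
    intro g hg
    simp only [Set.mem_setOf_eq] at hg ⊢
    by_contra hcon
    exact hg (by simp only [Gk]; rw [if_neg hcon])
  have hdiff : ∀ k, ‖T k - mulOp G hC hG‖ ≤ (1 : ℝ) / (k + 1) := by
    intro k
    refine ContinuousLinearMap.opNorm_le_bound _ (by positivity) fun ξ => ?_
    refine norm_le_mul (G := fun g => Gk k g - G g) (C := (1 : ℝ) / (k + 1))
      (by positivity) (fun g => ?_) ξ (fun g => ?_)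
    · by_cases h : (1 : ℝ) / (k + 1) ≤ ‖G g‖
      · simp only [Gk]
        rw [if_pos h]
        simp only [sub_self, norm_zero]
        positivity
      · simp only [Gk]
        rw [if_neg h, zero_sub, norm_neg]
        exact le_of_not_ge h
    · simp only [ContinuousLinearMap.sub_apply, lp.coeFn_sub, Pi.sub_apply, T,
        mulOp_apply]
      exact (mV_sub _ _ _).symm
  have htend : Filter.Tendsto T Filter.atTop (nhds (mulOp G hC hG)) := by
    rw [tendsto_iff_norm_sub_tendsto_zero]
    refine squeeze_zero (fun k => norm_nonneg _) hdiff ?_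
    exact tendsto_one_div_add_atTop_nhds_zero_nat
  exact isCompactOperator_of_tendsto htend (Filter.Eventually.of_forall hTk)

end FRaux

/-- If `F : π → Matrix (Fin n) (Fin n) ℂ` is bounded and satisfies conditions
(1.4) and (1.5), then the pair `(L, Φ_F)` — the left regular representation together with
the multiplication operator — is a Fredholm representation of `π`: `Φ_F` is invertible
modulo compact operators and commutes with each `L_h` modulo compact operators. -/
theorem pair_is_fredholm_representation
    {π : Type*} [Group π] {n : ℕ}
    (F : π → Matrix (Fin n) (Fin n) ℂ)
    (hbd : ∃ C : ℝ, ∀ g : π, ‖F g‖ ≤ C)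
    (h14 : ∃ (S : Finset π) (C : ℝ), 0 < C ∧
      ∀ g ∉ S, IsUnit (F g) ∧ ‖(F g)⁻¹‖ ≤ C)
    (h15 : ∀ h : π, ∀ ε : ℝ, 0 < ε → {g : π | ε ≤ ‖F (h * g) - F g‖}.Finite)
    (Φ : lp (fun _ : π => EuclideanSpace ℂ (Fin n)) 2 →L[ℂ]
         lp (fun _ : π => EuclideanSpace ℂ (Fin n)) 2)
    (hΦ : ∀ (ξ : lp (fun _ : π => EuclideanSpace ℂ (Fin n)) 2) (g : π),
      Φ ξ g = (F g).mulVec (ξ g))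
    (L : π → (lp (fun _ : π => EuclideanSpace ℂ (Fin n)) 2 →L[ℂ]
              lp (fun _ : π => EuclideanSpace ℂ (Fin n)) 2))
    (hL : ∀ (h : π) (ξ : lp (fun _ : π => EuclideanSpace ℂ (Fin n)) 2) (g : π),
      L h ξ g = ξ (h⁻¹ * g)) :
    (∃ Ψ : lp (fun _ : π => EuclideanSpace ℂ (Fin n)) 2 →L[ℂ]
           lp (fun _ : π => EuclideanSpace ℂ (Fin n)) 2,
      IsCompactOperator
        (Φ ∘L Ψ - ContinuousLinearMap.id ℂ (lp (fun _ : π => EuclideanSpace ℂ (Fin n)) 2)) ∧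
      IsCompactOperator
        (Ψ ∘L Φ - ContinuousLinearMap.id ℂ (lp (fun _ : π => EuclideanSpace ℂ (Fin n)) 2))) ∧
    (∀ h : π, IsCompactOperator (Φ ∘L L h - L h ∘L Φ)) := by
  classical
  have hΦ' : ∀ ξ g, Φ ξ g = FRaux.mV (F g) (ξ g) := fun ξ g => by
    apply WithLp.ofLp_injective; rw [hΦ]; rfl
  obtain ⟨C0, hC0⟩ := hbd
  set C1 : ℝ := max C0 0 with hC1def
  have hC1 : 0 ≤ C1 := le_max_right _ _
  have hF1 : ∀ g, ‖F g‖ ≤ C1 := fun g => (hC0 g).trans (le_max_left _ _)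
  constructor
  · obtain ⟨S, C, hCpos, hS⟩ := h14
    set Gi : π → Matrix (Fin n) (Fin n) ℂ := fun g => if g ∈ S then 0 else (F g)⁻¹
      with hGidef
    have hmC : (0 : ℝ) ≤ max C 0 := le_max_right _ _
    have hGib : ∀ g, ‖Gi g‖ ≤ max C 0 := by
      intro g
      by_cases h : g ∈ S
      · simp only [hGidef]
        rw [if_pos h, norm_zero]
        exact le_max_right _ _
      · simp only [hGidef]
        rw [if_neg h]
        exact ((hS g h).2).trans (le_max_left _ _)
    refine ⟨FRaux.mulOp Gi hmC hGib, ?_, ?_⟩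
    · set E : π → Matrix (Fin n) (Fin n) ℂ := fun g => F g * Gi g - 1 with hEdef
      have hCE : (0 : ℝ) ≤ C1 * max C 0 + ‖(1 : Matrix (Fin n) (Fin n) ℂ)‖ :=
        add_nonneg (mul_nonneg hC1 hmC) (norm_nonneg _)
      have hEb : ∀ g, ‖E g‖ ≤ C1 * max C 0 + ‖(1 : Matrix (Fin n) (Fin n) ℂ)‖ := by
        intro g
        simp only [hEdef]
        refine (norm_sub_le _ _).trans (add_le_add ?_ le_rfl)
        exact ((F g).l2_opNorm_mul (Gi g)).trans
          (mul_le_mul (hF1 g) (hGib g) (norm_nonneg _) hC1)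
      have hEfin : {g : π | E g ≠ 0}.Finite := by
        refine S.finite_toSet.subset fun g hg => ?_
        by_contra hgS
        have hgS' : g ∉ S := fun hmem => hgS (Finset.mem_coe.2 hmem)
        refine hg ?_
        show E g = 0
        simp only [hEdef, hGidef]
        rw [if_neg hgS', Matrix.mul_nonsing_inv _ ((Matrix.isUnit_iff_isUnit_det _).1
          (hS g hgS').1), sub_self]
      have heq : Φ ∘L FRaux.mulOp Gi hmC hGib -
          ContinuousLinearMap.id ℂ (lp (fun _ : π => EuclideanSpace ℂ (Fin n)) 2) =
          FRaux.mulOp E hCE hEb := by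
        refine ContinuousLinearMap.ext fun ξ => lp.ext (funext fun g => ?_)
        simp only [ContinuousLinearMap.sub_apply, ContinuousLinearMap.comp_apply,
          ContinuousLinearMap.id_apply, lp.coeFn_sub, Pi.sub_apply, FRaux.mulOp_apply]
        rw [hΦ']
        simp only [FRaux.mulOp_apply, hEdef]
        rw [FRaux.mV_sub, FRaux.mV_mul, FRaux.mV_one]
      rw [heq]
      exact FRaux.isCompact_mulOp_of_finite E hCE hEb hEfin
    · set E : π → Matrix (Fin n) (Fin n) ℂ := fun g => Gi g * F g - 1 with hEdef
      have hCE : (0 : ℝ) ≤ max C 0 * C1 + ‖(1 : Matrix (Fin n) (Fin n) ℂ)‖ :=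
        add_nonneg (mul_nonneg hmC hC1) (norm_nonneg _)
      have hEb : ∀ g, ‖E g‖ ≤ max C 0 * C1 + ‖(1 : Matrix (Fin n) (Fin n) ℂ)‖ := by
        intro g
        simp only [hEdef]
        refine (norm_sub_le _ _).trans (add_le_add ?_ le_rfl)
        exact ((Gi g).l2_opNorm_mul (F g)).trans
          (mul_le_mul (hGib g) (hF1 g) (norm_nonneg _) hmC)
      have hEfin : {g : π | E g ≠ 0}.Finite := by
        refine S.finite_toSet.subset fun g hg => ?_
        by_contra hgS
        have hgS' : g ∉ S := fun hmem => hgS (Finset.mem_coe.2 hmem)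
        refine hg ?_
        show E g = 0
        simp only [hEdef, hGidef]
        rw [if_neg hgS', Matrix.nonsing_inv_mul _ ((Matrix.isUnit_iff_isUnit_det _).1
          (hS g hgS').1), sub_self]
      have heq : FRaux.mulOp Gi hmC hGib ∘L Φ -
          ContinuousLinearMap.id ℂ (lp (fun _ : π => EuclideanSpace ℂ (Fin n)) 2) =
          FRaux.mulOp E hCE hEb := by
        refine ContinuousLinearMap.ext fun ξ => lp.ext (funext fun g => ?_)
        simp only [ContinuousLinearMap.sub_apply, ContinuousLinearMap.comp_apply,
          ContinuousLinearMap.id_apply, lp.coeFn_sub, Pi.sub_apply, FRaux.mulOp_apply]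
        rw [hΦ']
        simp only [hEdef]
        rw [FRaux.mV_sub, FRaux.mV_mul, FRaux.mV_one]
      rw [heq]
      exact FRaux.isCompact_mulOp_of_finite E hCE hEb hEfin
  · intro h
    set D : π → Matrix (Fin n) (Fin n) ℂ := fun g => F g - F (h⁻¹ * g) with hDdef
    have hD0 : (0 : ℝ) ≤ C1 + C1 := add_nonneg hC1 hC1
    have hDb : ∀ g, ‖D g‖ ≤ C1 + C1 := fun g =>
      (norm_sub_le _ _).trans (add_le_add (hF1 g) (hF1 _))
    have hv : ∀ ε : ℝ, 0 < ε → {g : π | ε ≤ ‖D g‖}.Finite := by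
      intro ε hε
      refine ((h15 h ε hε).image (fun g => h * g)).subset fun g hg => ?_
      refine ⟨h⁻¹ * g, ?_, by group⟩
      simp only [Set.mem_setOf_eq, mul_inv_cancel_left]
      simpa only [hDdef, Set.mem_setOf_eq] using hg
    have hK := FRaux.isCompact_mulOp_of_vanishing D hD0 hDb hv
    have heq : Φ ∘L L h - L h ∘L Φ = FRaux.mulOp D hD0 hDb ∘L L h := by
      refine ContinuousLinearMap.ext fun ξ => lp.ext (funext fun g => ?_)
      simp only [ContinuousLinearMap.sub_apply, ContinuousLinearMap.comp_apply,
        lp.coeFn_sub, Pi.sub_apply, FRaux.mulOp_apply]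
      rw [hΦ' (L h ξ) g, hL h (Φ ξ) g, hΦ' ξ (h⁻¹ * g)]
      simp only [hDdef]
      rw [FRaux.mV_sub, hL h ξ g]
    rw [heq]
    exact hK.comp_clm (L h)
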